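/- Let E be a Banach space with a dense subset of cardinality λ (λ infinite). Then there exists a surjective bounded linear operator from ℓ¹(λ) onto E which maps the open unit ball of ℓ¹(λ) onto the open unit ball of E; in particular, every Banach space of density character at most λ is a quotient of ℓ¹(λ). -/

import Mathlib

open scoped ENNReal

namespace Stmt13Aux

variable {ι : Type u} {E : Type u} [NormedAddCommGroup E] [NormedSpace ℝ E]

lemma one_toReal : (1 : ℝ≥0∞).toReal = 1 := by simp

lemma summable_abs (x : lp (fun _ : ι => ℝ) 1) : Summable (fun i => ‖x i‖) := by
  have h := lp.hasSum_norm (p := 1) (by norm_num) x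
  simpa [one_toReal] using h.summable

lemma summable_smul [CompleteSpace E] (f : ι → E) (hf : ∀ i, ‖f i‖ ≤ 1) (x : lp (fun _ : ι => ℝ) 1) :
    Summable (fun i => x i • f i) := by
  refine Summable.of_norm (Summable.of_nonneg_of_le (fun i => norm_nonneg _)
    (fun i => ?_) (summable_abs x))
  rw [norm_smul]
  calc ‖x i‖ * ‖f i‖ ≤ ‖x i‖ * 1 := by
        exact mul_le_mul_of_nonneg_left (hf i) (norm_nonneg _)
    _ = ‖x i‖ := mul_one _

lemma norm_tsum_le (f : ι → E) (hf : ∀ i, ‖f i‖ ≤ 1) (x : lp (fun _ : ι => ℝ) 1) :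
    ‖∑' i, x i • f i‖ ≤ ‖x‖ := by
  have h1 : Summable fun i => ‖x i • f i‖ := by
    refine Summable.of_nonneg_of_le (fun i => norm_nonneg _) (fun i => ?_) (summable_abs x)
    rw [norm_smul]
    calc ‖x i‖ * ‖f i‖ ≤ ‖x i‖ * 1 :=
          mul_le_mul_of_nonneg_left (hf i) (norm_nonneg _)
      _ = ‖x i‖ := mul_one _
  have h2 : ‖∑' i, x i • f i‖ ≤ ∑' i, ‖x i • f i‖ := norm_tsum_le_tsum_norm h1
  have h3 : ∑' i, ‖x i • f i‖ ≤ ∑' i, ‖x i‖ := by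
    refine Summable.tsum_le_tsum (fun i => ?_) h1 (summable_abs x)
    rw [norm_smul]
    calc ‖x i‖ * ‖f i‖ ≤ ‖x i‖ * 1 :=
          mul_le_mul_of_nonneg_left (hf i) (norm_nonneg _)
      _ = ‖x i‖ := mul_one _
  have h4 : ∑' i, ‖x i‖ = ‖x‖ := by
    have h := lp.hasSum_norm (p := 1) (by norm_num) x
    simpa [one_toReal] using h.tsum_eq
  linarith

noncomputable def Tmap (f : ι → E) (hf : ∀ i, ‖f i‖ ≤ 1) [CompleteSpace E] :
    lp (fun _ : ι => ℝ) 1 →L[ℝ] E :=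
  LinearMap.mkContinuous
    { toFun := fun x => ∑' i, x i • f i
      map_add' := fun x y => by
        have hx := summable_smul f hf x
        have hy := summable_smul f hf y
        simp only []
        rw [← Summable.tsum_add hx hy]
        congr 1
        ext i
        have : (↑(x + y) : ∀ _ : ι, ℝ) i = x i + y i := by
          rw [lp.coeFn_add]; rfl
        rw [this, add_smul]
      map_smul' := fun c x => by
        have : ∀ i, (↑(c • x) : ∀ _ : ι, ℝ) i • f i = c • (x i • f i) := by
          intro i
          have : (↑(c • x) : ∀ _ : ι, ℝ) i = c * x i := by
            rw [lp.coeFn_smul]; rfl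
          rw [this, smul_smul]
        simp only [this, RingHom.id_apply]
        exact Summable.tsum_const_smul c (summable_smul f hf x)
        }
    1 (fun x => by simpa using norm_tsum_le f hf x)


lemma Tmap_single [DecidableEq ι] [CompleteSpace E] (f : ι → E) (hf : ∀ i, ‖f i‖ ≤ 1) (i : ι) (a : ℝ) :
    Tmap f hf (lp.single 1 i a) = a • f i := by
  have : Tmap f hf (lp.single 1 i a) = ∑' j, (lp.single 1 i a : ∀ _ : ι, ℝ) j • f j := rfl
  rw [this, tsum_eq_single i]
  · rw [lp.single_apply_self (E := fun _ : ι => ℝ)]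
  · intro j hj
    rw [lp.single_apply_ne (E := fun _ : ι => ℝ) 1 i a hj, zero_smul]

lemma exists_preimage [DecidableEq ι] [CompleteSpace E] (f : ι → E) (hf : ∀ i, ‖f i‖ ≤ 1)
    (hfd : ∀ v : E, ‖v‖ ≤ 1 → ∀ ε > 0, ∃ i, ‖v - f i‖ < ε)
    (y : E) (hy : ‖y‖ < 1) :
    ∃ x : lp (fun _ : ι => ℝ) 1, ‖x‖ < 1 ∧ Tmap f hf x = y := by
  set δ : ℝ := (1 - ‖y‖) / 2 with hδdef
  have hy0 : (0:ℝ) ≤ ‖y‖ := norm_nonneg y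
  have hδ0 : 0 < δ := by simp only [hδdef]; linarith
  have hδ1 : δ < 1 := by simp only [hδdef]; linarith
  have hP : ∀ z : E, ∃ i, ‖z - ‖z‖ • f i‖ ≤ δ * ‖z‖ := by
    intro z
    rcases eq_or_ne z 0 with rfl | hz
    · obtain ⟨i, -⟩ := hfd 0 (by simp) 1 one_pos
      exact ⟨i, by simp⟩
    · have hz' : 0 < ‖z‖ := norm_pos_iff.mpr hz
      obtain ⟨i, hi⟩ := hfd (‖z‖⁻¹ • z)
        (by rw [norm_smul, Real.norm_eq_abs, abs_of_pos (inv_pos.mpr hz'),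
              inv_mul_cancel₀ hz'.ne'])
        δ hδ0
      refine ⟨i, ?_⟩
      have heq : z - ‖z‖ • f i = ‖z‖ • (‖z‖⁻¹ • z - f i) := by
        rw [smul_sub, smul_smul, mul_inv_cancel₀ hz'.ne', one_smul]
      rw [heq, norm_smul, Real.norm_eq_abs, abs_of_pos hz', mul_comm δ ‖z‖]
      exact mul_le_mul_of_nonneg_left hi.le hz'.le
  choose g hg using hP
  set z : ℕ → E := fun n => Nat.rec y (fun _ w => w - ‖w‖ • f (g w)) n with hzdef
  have hzsucc : ∀ n, z (n + 1) = z n - ‖z n‖ • f (g (z n)) := fun n => rfl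
  have hznorm : ∀ n, ‖z n‖ ≤ δ ^ n * ‖y‖ := by
    intro n
    induction n with
    | zero =>
      show ‖y‖ ≤ δ ^ 0 * ‖y‖
      simp
    | succ n ih =>
      calc ‖z (n + 1)‖ ≤ δ * ‖z n‖ := by rw [hzsucc]; exact hg (z n)
        _ ≤ δ * (δ ^ n * ‖y‖) := mul_le_mul_of_nonneg_left ih hδ0.le
        _ = δ ^ (n + 1) * ‖y‖ := by ring
  set xs : ℕ → lp (fun _ : ι => ℝ) 1 := fun n => lp.single 1 (g (z n)) ‖z n‖ with hxsdef
  have hxsnorm : ∀ n, ‖xs n‖ = ‖z n‖ := by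
    intro n
    have := lp.norm_single (E := fun _ : ι => ℝ) (p := 1) (by norm_num) (g (z n)) ‖z n‖
    exact this.trans (norm_norm _)
  have hgeo : Summable (fun n : ℕ => δ ^ n * ‖y‖) :=
    (summable_geometric_of_lt_one hδ0.le hδ1).mul_right ‖y‖
  have hxs_norm_sum : Summable (fun n => ‖xs n‖) := by
    refine Summable.of_nonneg_of_le (fun n => norm_nonneg _) (fun n => ?_) hgeo
    rw [hxsnorm]; exact hznorm n
  have hxs_sum : Summable xs := Summable.of_norm hxs_norm_sum
  refine ⟨∑' n, xs n, ?_, ?_⟩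
  · have h1 : ‖∑' n, xs n‖ ≤ ∑' n, ‖xs n‖ := norm_tsum_le_tsum_norm hxs_norm_sum
    have h2 : ∑' n, ‖xs n‖ ≤ ∑' n, δ ^ n * ‖y‖ := by
      refine Summable.tsum_le_tsum (fun n => ?_) hxs_norm_sum hgeo
      rw [hxsnorm]; exact hznorm n
    have h3 : ∑' n : ℕ, δ ^ n * ‖y‖ = (1 - δ)⁻¹ * ‖y‖ := by
      rw [tsum_mul_right, tsum_geometric_of_lt_one hδ0.le hδ1]
    have h1δ : (0:ℝ) < 1 - δ := by linarith
    have h4 : (1 - δ)⁻¹ * ‖y‖ < 1 := by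
      have h5 : ‖y‖ < 1 - δ := by simp only [hδdef]; linarith
      calc (1 - δ)⁻¹ * ‖y‖ < (1 - δ)⁻¹ * (1 - δ) :=
            mul_lt_mul_of_pos_left h5 (inv_pos.mpr h1δ)
        _ = 1 := inv_mul_cancel₀ h1δ.ne'
    linarith [h1, h2, h3 ▸ h2]
  · have hz0 : Filter.Tendsto z Filter.atTop (nhds 0) := by
      refine squeeze_zero_norm hznorm ?_
      have := (tendsto_pow_atTop_nhds_zero_of_lt_one hδ0.le hδ1).mul_const ‖y‖
      simpa using this
    have hterm : ∀ n, Tmap f hf (xs n) = z n - z (n + 1) := by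
      intro n
      rw [hxsdef]
      simp only []
      rw [Tmap_single, hzsucc n]
      abel
    have hsumnorm : Summable fun n => ‖z n - z (n + 1)‖ := by
      refine Summable.of_nonneg_of_le (fun n => norm_nonneg _) (fun n => ?_)
        (hgeo.add (((summable_geometric_of_lt_one hδ0.le hδ1).mul_right ‖y‖).comp_injective
          (add_left_injective 1)))
      calc ‖z n - z (n + 1)‖ ≤ ‖z n‖ + ‖z (n + 1)‖ := norm_sub_le _ _
        _ ≤ δ ^ n * ‖y‖ + δ ^ (n + 1) * ‖y‖ := add_le_add (hznorm n) (hznorm (n + 1))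
  
    have htel : HasSum (fun n => z n - z (n + 1)) y := by
      rw [hasSum_iff_tendsto_nat_of_summable_norm hsumnorm]
      have heq : ∀ n, ∑ i ∈ Finset.range n, (z i - z (i + 1)) = y - z n := by
        intro n
        rw [Finset.sum_range_sub' z n]
        rfl
      simp only [heq]
      simpa using Filter.Tendsto.sub (tendsto_const_nhds (x := y)) hz0
    calc Tmap f hf (∑' n, xs n) = ∑' n, Tmap f hf (xs n) :=
          (Tmap f hf).map_tsum hxs_sum
      _ = ∑' n, (z n - z (n + 1)) := tsum_congr hterm
      _ = y := htel.tsum_eq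

end Stmt13Aux


theorem stmt13 (ι : Type u) (hι : Cardinal.aleph0 ≤ Cardinal.mk ι)
    (E : Type u) [NormedAddCommGroup E] [NormedSpace ℝ E] [CompleteSpace E]
    (D : Set E) (hD : Dense D) (hcard : Cardinal.mk D ≤ Cardinal.mk ι) :
    ∃ T : lp (fun _ : ι => ℝ) 1 →L[ℝ] E,
      Function.Surjective T ∧
      T '' Metric.ball 0 1 = Metric.ball (0 : E) 1 := by
  classical
  -- the dense subset of the open unit ball
  set D' : Set E := D ∩ Metric.ball 0 1 with hD'def
  have hmem : ∀ v : E, ‖v‖ ≤ 1 → ∀ ε > 0, ∃ d ∈ D', ‖v - d‖ < ε := by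
    intro v hv ε hε
    set r : ℝ := min ε 1 with hrdef
    have hr0 : 0 < r := lt_min hε one_pos
    have hr1 : r ≤ 1 := min_le_right _ _
    have hrε : r ≤ ε := min_le_left _ _
    set v' : E := (1 - r / 2) • v with hv'def
    have hv'n : ‖v'‖ ≤ 1 - r / 2 := by
      rw [hv'def, norm_smul, Real.norm_eq_abs, abs_of_nonneg (by linarith)]
      calc (1 - r / 2) * ‖v‖ ≤ (1 - r / 2) * 1 :=
            mul_le_mul_of_nonneg_left hv (by linarith)
        _ = 1 - r / 2 := mul_one _
    obtain ⟨d, hdD, hd⟩ := hD.exists_dist_lt v' (show (0:ℝ) < r / 2 by linarith)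
    rw [dist_eq_norm] at hd
    have hdn : ‖d‖ < 1 := by
      calc ‖d‖ = ‖v' - (v' - d)‖ := by congr 1; abel
        _ ≤ ‖v'‖ + ‖v' - d‖ := norm_sub_le _ _
        _ < (1 - r / 2) + r / 2 := add_lt_add_of_le_of_lt hv'n hd
        _ = 1 := by ring
    refine ⟨d, ⟨hdD, Metric.mem_ball.mpr (by rwa [dist_zero_right])⟩, ?_⟩
    have hvv' : v - v' = (r / 2) • v := by
      rw [hv'def]
      nth_rewrite 1 [← one_smul ℝ v]
      rw [← sub_smul]
      congr 1
      ring
    calc ‖v - d‖ = ‖(v - v') + (v' - d)‖ := by congr 1; abel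
      _ ≤ ‖v - v'‖ + ‖v' - d‖ := norm_add_le _ _
      _ < r / 2 + r / 2 := by
          refine add_lt_add_of_le_of_lt ?_ hd
          rw [hvv', norm_smul, Real.norm_eq_abs, abs_of_nonneg (by linarith)]
          calc r / 2 * ‖v‖ ≤ r / 2 * 1 := mul_le_mul_of_nonneg_left hv (by linarith)
            _ = r / 2 := mul_one _
      _ = r := by ring
      _ ≤ ε := hrε
  have hno : D'.Nonempty := by
    obtain ⟨d, hd, -⟩ := hmem 0 (by simp) 1 one_pos
    exact ⟨d, hd⟩
  haveI : Nonempty D' := hno.to_subtype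
  have hcard' : Cardinal.mk D' ≤ Cardinal.mk ι :=
    (Cardinal.mk_le_mk_of_subset (Set.inter_subset_left (t := Metric.ball 0 1))).trans hcard
  obtain ⟨e⟩ := Cardinal.le_def D' ι |>.mp hcard'
  set f : ι → E := fun i => ((Function.invFun (⇑e) i : D') : E) with hfdef
  have hf : ∀ i, ‖f i‖ ≤ 1 := by
    intro i
    have := (Function.invFun (⇑e) i).2.2
    rw [Metric.mem_ball, dist_zero_right] at this
    exact this.le
  have hfd : ∀ v : E, ‖v‖ ≤ 1 → ∀ ε > 0, ∃ i, ‖v - f i‖ < ε := by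
    intro v hv ε hε
    obtain ⟨d, hd, hdv⟩ := hmem v hv ε hε
    obtain ⟨i, hi⟩ := Function.invFun_surjective (f := (⇑e)) e.injective (⟨d, hd⟩ : D')
    refine ⟨i, ?_⟩
    have : f i = d := by rw [hfdef]; simp only []; rw [hi]
    rwa [this]
  refine ⟨Stmt13Aux.Tmap f hf, ?_, ?_⟩
  · -- surjectivity
    intro w
    rcases eq_or_ne w 0 with rfl | hw
    · exact ⟨0, map_zero _⟩
    · have hw' : (0:ℝ) < ‖w‖ := norm_pos_iff.mpr hw
      have hn : ‖(2 * ‖w‖)⁻¹ • w‖ < 1 := by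
        rw [norm_smul, Real.norm_eq_abs, abs_of_pos (by positivity)]
        rw [mul_inv, mul_assoc, inv_mul_cancel₀ hw'.ne']
        norm_num
      obtain ⟨x, -, hx⟩ := Stmt13Aux.exists_preimage f hf hfd _ hn
      refine ⟨(2 * ‖w‖) • x, ?_⟩
      rw [map_smul, hx, smul_inv_smul₀ (by positivity)]
  · -- image of the unit ball
    ext w
    constructor
    · rintro ⟨x, hx, rfl⟩
      rw [Metric.mem_ball, dist_zero_right] at hx ⊢
      calc ‖Stmt13Aux.Tmap f hf x‖ ≤ ‖x‖ := Stmt13Aux.norm_tsum_le f hf x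
        _ < 1 := hx
    · intro hw
      rw [Metric.mem_ball, dist_zero_right] at hw
      obtain ⟨x, hx, hTx⟩ := Stmt13Aux.exists_preimage f hf hfd w hw
      exact ⟨x, Metric.mem_ball.mpr (by rwa [dist_zero_right]), hTx⟩
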